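/- Let n ≥ 1, let L₂, …, Lₙ be Kripke complete monomodal logics, and let L = T × L₂ × … × Lₙ. Fix an n-modal formula φ whose variables are among p₁, …, p_m and let A and σ be the formula and translation defined from φ. If A → σ(φ) ∉ L, then φ ∉ L. (Direction (⇒) of Lemma 3.1, in contrapositive form) -/

import Mathlib

namespace ModalProducts

/-- `N`-modal formulas over propositional variables indexed by `ℕ`
(the variable `pₖ` is `var k`; the extra variable `p` is `var 0`). -/
inductive MF (N : ℕ) : Type
  | var : ℕ → MF N
  | bot : MF N
  | and : MF N → MF N → MF N
  | or  : MF N → MF N → MF N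
  | imp : MF N → MF N → MF N
  | box : Fin N → MF N → MF N
deriving DecidableEq

namespace MF

variable {N : ℕ}

/-- negation: `¬ψ = ψ → ⊥`. -/
def neg (φ : MF N) : MF N := imp φ bot

/-- diamond: `◇ᵢψ = ¬□ᵢ¬ψ`. -/
def dia (i : Fin N) (φ : MF N) : MF N := neg (box i (neg φ))

/-- modal depth. -/
def md : MF N → ℕ
  | var _ => 0
  | bot => 0
  | and φ ψ => max (md φ) (md ψ)
  | or φ ψ => max (md φ) (md ψ)
  | imp φ ψ => max (md φ) (md ψ)
  | box _ φ => md φ + 1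

/-- length (number of symbols; the variable `pₖ` counts as `k+1` symbols,
accounting for the subscript). -/
def len : MF N → ℕ
  | var q => q + 1
  | bot => 1
  | and φ ψ => len φ + len ψ + 1
  | or φ ψ => len φ + len ψ + 1
  | imp φ ψ => len φ + len ψ + 1
  | box _ φ => len φ + 1

/-- the set of propositional variables occurring in a formula. -/
def vars : MF N → Set ℕ
  | var q => {q}
  | bot => ∅
  | and φ ψ => vars φ ∪ vars ψ
  | or φ ψ => vars φ ∪ vars ψ
  | imp φ ψ => vars φ ∪ vars ψ
  | box _ φ => vars φ

/-- the largest index of a variable occurring in a formula (0 if none). -/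
def maxVar : MF N → ℕ
  | var q => q
  | bot => 0
  | and φ ψ => max (maxVar φ) (maxVar ψ)
  | or φ ψ => max (maxVar φ) (maxVar ψ)
  | imp φ ψ => max (maxVar φ) (maxVar ψ)
  | box _ φ => maxVar φ

/-- the list of subformulas of a formula. -/
def subfs : MF N → List (MF N)
  | var q => [var q]
  | bot => [bot]
  | and φ ψ => and φ ψ :: (subfs φ ++ subfs ψ)
  | or φ ψ => or φ ψ :: (subfs φ ++ subfs ψ)
  | imp φ ψ => imp φ ψ :: (subfs φ ++ subfs ψ)
  | box i φ => box i φ :: subfs φ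

/-- uniform substitution of formulas for variables. -/
def subst (s : ℕ → MF N) : MF N → MF N
  | var q => s q
  | bot => bot
  | and φ ψ => and (subst s φ) (subst s ψ)
  | or φ ψ => or (subst s φ) (subst s ψ)
  | imp φ ψ => imp (subst s φ) (subst s ψ)
  | box i φ => box i (subst s φ)

end MF

/-- `θ` is a subformula of `φ`. -/
def Subformula {N : ℕ} (θ φ : MF N) : Prop := θ ∈ φ.subfs

/-- A Kripke `N`-frame: a nonempty set of points with `N` accessibility relations. -/
structure Frame (N : ℕ) where
  W : Type
  nonempty : Nonempty W
  R : Fin N → W → W → Prop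

/-- Truth of a formula at a point of a frame under a valuation. -/
def Sat {N : ℕ} (F : Frame N) (v : ℕ → Set F.W) : F.W → MF N → Prop
  | x, .var q => x ∈ v q
  | _, .bot => False
  | x, .and φ ψ => Sat F v x φ ∧ Sat F v x ψ
  | x, .or φ ψ => Sat F v x φ ∨ Sat F v x ψ
  | x, .imp φ ψ => Sat F v x φ → Sat F v x ψ
  | x, .box i φ => ∀ y, F.R i x y → Sat F v y φ

/-- Validity of a formula in a frame: truth at every point under every valuation. -/
def Valid {N : ℕ} (F : Frame N) (φ : MF N) : Prop := ∀ (v : ℕ → Set F.W) (x : F.W), Sat F v x φ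

/-- A set of formulas is valid in a frame if all of its members are. -/
def ValidSet {N : ℕ} (F : Frame N) (L : Set (MF N)) : Prop := ∀ φ ∈ L, Valid F φ

/-- The logic of a class of frames. -/
def Logic {N : ℕ} (C : Set (Frame N)) : Set (MF N) := {φ | ∀ F ∈ C, Valid F φ}

/-- A logic is Kripke complete if it is the logic of some nonempty class of frames. -/
def KripkeComplete {N : ℕ} (L : Set (MF N)) : Prop :=
  ∃ C : Set (Frame N), C.Nonempty ∧ L = Logic C

/-- The product of `N` 1-frames. -/
def prodFrame {N : ℕ} (Fs : Fin N → Frame 1) : Frame N where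
  W := ∀ i, (Fs i).W
  nonempty := ⟨fun i => (Fs i).nonempty.some⟩
  R := fun i x y => (Fs i).R 0 (x i) (y i) ∧ ∀ k, k ≠ i → x k = y k

/-- The product of `N` Kripke complete monomodal logics: the logic of the class of
products of frames of the factors. -/
def productLogic {N : ℕ} (Ls : Fin N → Set (MF 1)) : Set (MF N) :=
  Logic {F | ∃ Fs : Fin N → Frame 1, (∀ i, ValidSet (Fs i) (Ls i)) ∧ F = prodFrame Fs}

/-- A 1-frame is reflexive. -/
def ReflexiveFrame (F : Frame 1) : Prop := ∀ x, F.R 0 x x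

/-- The logic `T` of all reflexive 1-frames. -/
def logicT : Set (MF 1) := Logic {F | ReflexiveFrame F}

/-- The logic `K` of all 1-frames. -/
def logicK : Set (MF 1) := Logic Set.univ

/-- The logic `S5` of all 1-frames whose relation is an equivalence. -/
def logicS5 : Set (MF 1) := Logic {F | Equivalence (F.R 0)}

section Translation

variable {n : ℕ}

/-- the variable `p`. -/
def pv : MF (n+1) := .var 0

/-- `◆₁ψ = ◇₁(¬p ∧ ◇₁(p ∧ ψ))`. -/
def blackDia (ψ : MF (n+1)) : MF (n+1) :=
  MF.dia 0 (.and (MF.neg pv) (MF.dia 0 (.and pv ψ)))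

/-- `α_k = ◆₁ᵏ □₁ p`. -/
def alphaF (k : ℕ) : MF (n+1) := blackDia^[k] (.box 0 pv)

/-- `β_k = ¬p ∧ ◇₁(p ∧ α_k)`. -/
def betaF (k : ℕ) : MF (n+1) := .and (MF.neg pv) (MF.dia 0 (.and pv (alphaF k)))

/-- `B = β_{m+1}`. -/
def Bf (m : ℕ) : MF (n+1) := betaF (m+1)

/-- The translation `σ`: `σ(p_k) = β_k`, `σ(⊥) = ⊥`, `σ` commutes with `∧, ∨, →`,
and `σ(□ᵢψ) = □ᵢ(B → σ(ψ))`. -/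
def sigmaT (m : ℕ) : MF (n+1) → MF (n+1)
  | .var k => betaF k
  | .bot => .bot
  | .and φ ψ => .and (sigmaT m φ) (sigmaT m ψ)
  | .or φ ψ => .or (sigmaT m φ) (sigmaT m ψ)
  | .imp φ ψ => .imp (sigmaT m φ) (sigmaT m ψ)
  | .box i φ => .box i (.imp (Bf m) (sigmaT m φ))

/-- conjunction of a head formula with a list of formulas. -/
def bigAnd (ψ : MF (n+1)) (l : List (MF (n+1))) : MF (n+1) := l.foldl .and ψ

/-- `□^{≤k}`: `□^{≤0}ψ = ψ`, `□^{≤k+1}ψ = □^{≤k}ψ ∧ □₁□^{≤k}ψ ∧ … ∧ □ₙ□^{≤k}ψ`. -/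
def boxLe : ℕ → MF (n+1) → MF (n+1)
  | 0, ψ => ψ
  | k+1, ψ => bigAnd (boxLe k ψ) (List.ofFn fun i : Fin (n+1) => .box i (boxLe k ψ))

/-- `□₋₁^{≤k}`: like `□^{≤k}` but using only `□₂, …, □ₙ`. -/
def boxLeTail : ℕ → MF (n+1) → MF (n+1)
  | 0, ψ => ψ
  | k+1, ψ => bigAnd (boxLeTail k ψ) (List.ofFn fun i : Fin n => .box i.succ (boxLeTail k ψ))

/-- `◇₋₁^{≤k}ψ = ¬□₋₁^{≤k}¬ψ`. -/
def diaLeTail (k : ℕ) (ψ : MF (n+1)) : MF (n+1) := MF.neg (boxLeTail k (MF.neg ψ))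

/-- `A = B ∧ □^{≤md φ}(B → □₋₁^{≤md φ}B) ∧ □^{≤md φ}(◇₋₁^{≤md φ}B → B)`. -/
def Af (m : ℕ) (φ : MF (n+1)) : MF (n+1) :=
  .and (Bf m)
    (.and (boxLe φ.md (.imp (Bf m) (boxLeTail φ.md (Bf m))))
          (boxLe φ.md (.imp (diaLeTail φ.md (Bf m)) (Bf m))))

end Translation

section Aux

variable {n : ℕ}

/-- relativization of boxes to a marker variable `t`. -/
def relv (t : ℕ) : MF (n+1) → MF (n+1)
  | .var q => .var q
  | .bot => .bot
  | .and ψ1 ψ2 => .and (relv t ψ1) (relv t ψ2)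
  | .or ψ1 ψ2 => .or (relv t ψ1) (relv t ψ2)
  | .imp ψ1 ψ2 => .imp (relv t ψ1) (relv t ψ2)
  | .box i ψ => .box i (.imp (.var t) (relv t ψ))

lemma sigma_eq (m : ℕ) (φ : MF (n+1)) :
    sigmaT m φ = (relv (m+1) φ).subst (fun q => betaF q) := by
  induction φ <;> simp_all [relv, sigmaT, MF.subst, Bf]

lemma subst_bigAnd (s : ℕ → MF (n+1)) (ψ : MF (n+1)) (l : List (MF (n+1))) :
    (bigAnd ψ l).subst s = bigAnd (ψ.subst s) (l.map (MF.subst s)) := by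
  induction l generalizing ψ with
  | nil => rfl
  | cons a l ih => exact ih (ψ.and a)

lemma subst_boxLe (s : ℕ → MF (n+1)) (k : ℕ) (ψ : MF (n+1)) :
    (boxLe k ψ).subst s = boxLe k (ψ.subst s) := by
  induction k with
  | zero => rfl
  | succ k ih =>
    show (bigAnd _ _).subst s = bigAnd _ _
    rw [subst_bigAnd, ih, List.map_ofFn]
    refine congrArg (bigAnd _) (congrArg List.ofFn ?_)
    funext i
    show MF.box i ((boxLe k ψ).subst s) = MF.box i (boxLe k (ψ.subst s))
    rw [ih]

lemma subst_boxLeTail (s : ℕ → MF (n+1)) (k : ℕ) (ψ : MF (n+1)) :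
    (boxLeTail k ψ).subst s = boxLeTail k (ψ.subst s) := by
  induction k with
  | zero => rfl
  | succ k ih =>
    show (bigAnd _ _).subst s = bigAnd _ _
    rw [subst_bigAnd, ih, List.map_ofFn]
    refine congrArg (bigAnd _) (congrArg List.ofFn ?_)
    funext i
    show MF.box i.succ ((boxLeTail k ψ).subst s) = MF.box i.succ (boxLeTail k (ψ.subst s))
    rw [ih]

/-- The formula `A` before substitution: with `B` replaced by the marker variable. -/
def Aaux (t d : ℕ) : MF (n+1) :=
  .and (.var t)
    (.and (boxLe d (.imp (.var t) (boxLeTail d (.var t))))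
          (boxLe d (.imp (diaLeTail d (.var t)) (.var t))))

lemma Af_eq (m : ℕ) (φ : MF (n+1)) :
    Af m φ = (Aaux (m+1) φ.md).subst (fun q => betaF q) := by
  show _ = (MF.and (MF.var (m+1))
    (MF.and (boxLe φ.md (MF.imp (MF.var (m+1)) (boxLeTail φ.md (MF.var (m+1)))))
          (boxLe φ.md (MF.imp (diaLeTail φ.md (MF.var (m+1))) (MF.var (m+1)))))).subst (fun q => betaF q)
  simp only [MF.subst, subst_boxLe, subst_boxLeTail, diaLeTail, MF.neg]
  rfl

lemma sat_subst {N : ℕ} (F : Frame N) (v : ℕ → Set F.W) (s : ℕ → MF N) (φ : MF N) :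
    ∀ x, Sat F v x (φ.subst s) ↔ Sat F (fun q => {y | Sat F v y (s q)}) x φ := by
  induction φ <;> intro x <;> simp [MF.subst, Sat, *]

end Aux
section Reach

variable {n : ℕ}

/-- reachability in at most `k` steps along any relation. -/
def reachLe (F : Frame (n+1)) : ℕ → F.W → F.W → Prop
  | 0, x, y => x = y
  | k+1, x, y => reachLe F k x y ∨ ∃ i z, F.R i x z ∧ reachLe F k z y

/-- reachability in at most `k` steps along the tail relations. -/
def treachLe (F : Frame (n+1)) : ℕ → F.W → F.W → Prop
  | 0, x, y => x = y
  | k+1, x, y => treachLe F k x y ∨ ∃ i : Fin n, ∃ z, F.R i.succ x z ∧ treachLe F k z y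

variable {F : Frame (n+1)}

lemma reachLe_mono {k : ℕ} {x y : F.W} (h : reachLe F k x y) : reachLe F (k+1) x y := Or.inl h

lemma treachLe_mono {k : ℕ} {x y : F.W} (h : treachLe F k x y) : treachLe F (k+1) x y := Or.inl h

lemma reachLe_le {k k' : ℕ} (hk : k ≤ k') {x y : F.W} (h : reachLe F k x y) :
    reachLe F k' x y := by
  induction hk with
  | refl => exact h
  | step _ ih => exact Or.inl ih

lemma treachLe_le {k k' : ℕ} (hk : k ≤ k') {x y : F.W} (h : treachLe F k x y) :
    treachLe F k' x y := by
  induction hk with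
  | refl => exact h
  | step _ ih => exact Or.inl ih

lemma reachLe_refl (k : ℕ) (x : F.W) : reachLe F k x x := by
  induction k with
  | zero => rfl
  | succ k ih => exact Or.inl ih

lemma reachLe_snoc {k : ℕ} {x y z : F.W} {i : Fin (n+1)} (h : reachLe F k x y)
    (hs : F.R i y z) : reachLe F (k+1) x z := by
  induction k generalizing x with
  | zero => cases h; exact Or.inr ⟨i, z, hs, rfl⟩
  | succ k ih =>
    rcases h with h | ⟨j, w, hw, hwy⟩
    · exact Or.inl (ih h)
    · exact Or.inr ⟨j, w, hw, ih hwy⟩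

lemma treachLe_snoc {k : ℕ} {x y z : F.W} {i : Fin n} (h : treachLe F k x y)
    (hs : F.R i.succ y z) : treachLe F (k+1) x z := by
  induction k generalizing x with
  | zero => cases h; exact Or.inr ⟨i, z, hs, rfl⟩
  | succ k ih =>
    rcases h with h | ⟨j, w, hw, hwy⟩
    · exact Or.inl (ih h)
    · exact Or.inr ⟨j, w, hw, ih hwy⟩

lemma sat_bigAnd (v : ℕ → Set F.W) (x : F.W) (ψ : MF (n+1)) (l : List (MF (n+1))) :
    Sat F v x (bigAnd ψ l) ↔ (Sat F v x ψ ∧ ∀ χ ∈ l, Sat F v x χ) := by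
  induction l generalizing ψ with
  | nil => simp [bigAnd]
  | cons a l ih =>
    have : Sat F v x (bigAnd ψ (a :: l)) ↔ _ := ih (ψ.and a)
    rw [this]
    simp only [Sat, List.mem_cons]
    constructor
    · rintro ⟨⟨h1, h2⟩, h3⟩
      exact ⟨h1, fun χ hχ => hχ.elim (fun e => e ▸ h2) (h3 χ)⟩
    · rintro ⟨h1, h2⟩
      exact ⟨⟨h1, h2 a (Or.inl rfl)⟩, fun χ hχ => h2 χ (Or.inr hχ)⟩

lemma sat_boxLe (v : ℕ → Set F.W) (k : ℕ) (ψ : MF (n+1)) :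
    ∀ x, Sat F v x (boxLe k ψ) ↔ ∀ y, reachLe F k x y → Sat F v y ψ := by
  induction k with
  | zero =>
    intro x
    constructor
    · rintro h y rfl; exact h
    · intro h; exact h x rfl
  | succ k ih =>
    intro x
    show Sat F v x (bigAnd _ _) ↔ _
    rw [sat_bigAnd]
    constructor
    · rintro ⟨h0, hs⟩ y (hy | ⟨i, z, hz, hzy⟩)
      · exact (ih x).1 h0 y hy
      · have hb : Sat F v x (.box i (boxLe k ψ)) := hs _ (by
          simp only [List.mem_ofFn, Set.mem_range]; exact ⟨i, rfl⟩)
        exact (ih z).1 (hb z hz) y hzy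
    · intro h
      refine ⟨(ih x).2 fun y hy => h y (Or.inl hy), ?_⟩
      intro χ hχ
      simp only [List.mem_ofFn, Set.mem_range] at hχ
      obtain ⟨i, rfl⟩ := hχ
      intro z hz
      exact (ih z).2 fun y hy => h y (Or.inr ⟨i, z, hz, hy⟩)

lemma sat_boxLeTail (v : ℕ → Set F.W) (k : ℕ) (ψ : MF (n+1)) :
    ∀ x, Sat F v x (boxLeTail k ψ) ↔ ∀ y, treachLe F k x y → Sat F v y ψ := by
  induction k with
  | zero =>
    intro x
    constructor
    · rintro h y rfl; exact h
    · intro h; exact h x rfl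
  | succ k ih =>
    intro x
    show Sat F v x (bigAnd _ _) ↔ _
    rw [sat_bigAnd]
    constructor
    · rintro ⟨h0, hs⟩ y (hy | ⟨i, z, hz, hzy⟩)
      · exact (ih x).1 h0 y hy
      · have hb : Sat F v x (.box i.succ (boxLeTail k ψ)) := hs _ (by
          simp only [List.mem_ofFn, Set.mem_range]; exact ⟨i, rfl⟩)
        exact (ih z).1 (hb z hz) y hzy
    · intro h
      refine ⟨(ih x).2 fun y hy => h y (Or.inl hy), ?_⟩
      intro χ hχ
      simp only [List.mem_ofFn, Set.mem_range] at hχ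
      obtain ⟨i, rfl⟩ := hχ
      intro z hz
      exact (ih z).2 fun y hy => h y (Or.inr ⟨i, z, hz, hy⟩)

lemma sat_diaLeTail (v : ℕ → Set F.W) (k : ℕ) (ψ : MF (n+1)) (x : F.W) :
    Sat F v x (diaLeTail k ψ) ↔ ∃ y, treachLe F k x y ∧ Sat F v y ψ := by
  have h1 : Sat F v x (diaLeTail k ψ) ↔ ¬ Sat F v x (boxLeTail k (MF.neg ψ)) := by
    constructor
    · intro h hb; exact h hb
    · intro h hb; exact h hb
  rw [h1, sat_boxLeTail]
  push_neg
  constructor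
  · rintro ⟨y, hy, hsy⟩
    refine ⟨y, hy, ?_⟩
    by_contra hc
    exact hsy fun hs => hc hs
  · rintro ⟨y, hy, hsy⟩
    exact ⟨y, hy, fun hn => hn hsy⟩

end Reach
section Construction

variable {n : ℕ}

/-- A reflexive frame validates `T`. -/
lemma validSet_logicT_of_reflexive {F : Frame 1} (h : ReflexiveFrame F) :
    ValidSet F logicT := fun _ hχ => hχ F h

/-- A frame validating `T` is reflexive. -/
lemma reflexive_of_validSet_logicT {F : Frame 1} (h : ValidSet F logicT) :
    ReflexiveFrame F := by
  intro x
  have hT : (MF.imp (.box 0 (.var 0)) (.var 0)) ∈ logicT := by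
    intro G hG v y
    intro hb
    exact hb y (hG y)
  have := h _ hT (fun _ => {y | F.R 0 x y}) x
  exact this fun y hy => hy

/-- The restriction of the first relation of a product frame to a nonempty set `T`,
as a 1-frame (reflexive if the first factor is). -/
def frameOne (Fs : Fin (n+1) → Frame 1) (T : Set (prodFrame Fs).W) (hT : T.Nonempty) :
    Frame 1 where
  W := {y : (prodFrame Fs).W // y ∈ T}
  nonempty := ⟨⟨hT.choose, hT.choose_spec⟩⟩
  R := fun _ a b => (Fs 0).R 0 (a.val 0) (b.val 0) ∧ ∀ k, k ≠ 0 → a.val k = b.val k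

lemma frameOne_reflexive (Fs : Fin (n+1) → Frame 1) (T : Set (prodFrame Fs).W)
    (hT : T.Nonempty) (h : ReflexiveFrame (Fs 0)) : ReflexiveFrame (frameOne Fs T hT) :=
  fun a => ⟨h _, fun _ _ => rfl⟩

/-- The factors of the new product frame. -/
def newFs (Fs : Fin (n+1) → Frame 1) (T : Set (prodFrame Fs).W) (hT : T.Nonempty) :
    Fin (n+1) → Frame 1 :=
  Fin.cases (frameOne Fs T hT) (fun j => Fs j.succ)

/-- Projection from the new product frame back to the original one. -/
def gmap (Fs : Fin (n+1) → Frame 1) (T : Set (prodFrame Fs).W) (hT : T.Nonempty)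
    (z : (prodFrame (newFs Fs T hT)).W) : (prodFrame Fs).W :=
  Fin.cases ((z 0).val 0) (fun j => z j.succ)

lemma gmap_zero (Fs : Fin (n+1) → Frame 1) (T : Set (prodFrame Fs).W) (hT : T.Nonempty)
    (z : (prodFrame (newFs Fs T hT)).W) : gmap Fs T hT z 0 = (z 0).val 0 := rfl

lemma gmap_succ (Fs : Fin (n+1) → Frame 1) (T : Set (prodFrame Fs).W) (hT : T.Nonempty)
    (z : (prodFrame (newFs Fs T hT)).W) (j : Fin n) : gmap Fs T hT z j.succ = z j.succ := rfl

/-- Tail reachability is insensitive to replacing the first coordinate. -/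
lemma treach_update (Fs : Fin (n+1) → Frame 1) (k : ℕ) {a w : (prodFrame Fs).W}
    (h : treachLe (prodFrame Fs) k a w) (b : (Fs 0).W) :
    treachLe (prodFrame Fs) k (Function.update a 0 b) (Function.update w 0 b) := by
  induction k generalizing a with
  | zero => cases h; rfl
  | succ k ih =>
    rcases h with h | ⟨i, z, hz, hzw⟩
    · exact Or.inl (ih h)
    · refine Or.inr ⟨i, Function.update z 0 b, ⟨?_, ?_⟩, ih hzw⟩
      · erw [Function.update_of_ne (Fin.succ_ne_zero i), Function.update_of_ne (Fin.succ_ne_zero i)]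
        exact hz.1
      · intro l hl
        by_cases hl0 : l = 0
        · subst hl0; erw [Function.update_self]
        · erw [Function.update_of_ne hl0, Function.update_of_ne hl0]
          exact hz.2 l hl

end Construction
section Bisim

variable {n : ℕ}

lemma key_bisim (Fs : Fin (n+1) → Frame 1) (u : ℕ → Set (prodFrame Fs).W) (t : ℕ)
    (hT : (u t).Nonempty) (d : ℕ) (x : (prodFrame Fs).W)
    (H1 : ∀ y, reachLe (prodFrame Fs) d x y → y ∈ u t →
      ∀ w, treachLe (prodFrame Fs) d y w → w ∈ u t)
    (H2 : ∀ y, reachLe (prodFrame Fs) d x y →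
      (∃ w, treachLe (prodFrame Fs) d y w ∧ w ∈ u t) → y ∈ u t)
    (ψ : MF (n+1)) :
    ∀ (c : ℕ) (z : (prodFrame (newFs Fs (u t) hT)).W),
      ψ.md + c ≤ d →
      reachLe (prodFrame Fs) c x ((z 0).val) →
      treachLe (prodFrame Fs) c ((z 0).val) (gmap Fs (u t) hT z) →
      (Sat (prodFrame (newFs Fs (u t) hT)) (fun q => (gmap Fs (u t) hT) ⁻¹' (u q)) z ψ ↔
       Sat (prodFrame Fs) u (gmap Fs (u t) hT z) (relv t ψ)) := by
  induction ψ with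
  | var q => intro c z _ _ _; exact Iff.rfl
  | bot => intro c z _ _ _; exact Iff.rfl
  | and ψ1 ψ2 ih1 ih2 =>
    intro c z hc h1 h2
    have hc1 : ψ1.md + c ≤ d := le_trans (Nat.add_le_add_right (le_max_left _ _) c) hc
    have hc2 : ψ2.md + c ≤ d := le_trans (Nat.add_le_add_right (le_max_right _ _) c) hc
    exact and_congr (ih1 c z hc1 h1 h2) (ih2 c z hc2 h1 h2)
  | or ψ1 ψ2 ih1 ih2 =>
    intro c z hc h1 h2
    have hc1 : ψ1.md + c ≤ d := le_trans (Nat.add_le_add_right (le_max_left _ _) c) hc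
    have hc2 : ψ2.md + c ≤ d := le_trans (Nat.add_le_add_right (le_max_right _ _) c) hc
    exact or_congr (ih1 c z hc1 h1 h2) (ih2 c z hc2 h1 h2)
  | imp ψ1 ψ2 ih1 ih2 =>
    intro c z hc h1 h2
    have hc1 : ψ1.md + c ≤ d := le_trans (Nat.add_le_add_right (le_max_left _ _) c) hc
    have hc2 : ψ2.md + c ≤ d := le_trans (Nat.add_le_add_right (le_max_right _ _) c) hc
    exact imp_congr (ih1 c z hc1 h1 h2) (ih2 c z hc2 h1 h2)
  | box i ψ ih =>
    intro c z hc h1 h2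
    have hc0 : ψ.md + 1 + c ≤ d := hc
    have hc' : ψ.md + (c+1) ≤ d := by omega
    have hcd : c + 1 ≤ d := by omega
    have hcd0 : c ≤ d := by omega
    rcases Fin.eq_zero_or_eq_succ i with rfl | ⟨j, rfl⟩
    · -- the first modality
      constructor
      · intro hAll w' hw hw'T
        have hstep : (prodFrame Fs).R 0 ((z 0).val) (Function.update ((z 0).val) 0 (w' 0)) := by
          refine ⟨?_, ?_⟩
          · erw [Function.update_self]; exact hw.1
          · intro k hk; erw [Function.update_of_ne hk]
        have h1' : reachLe (prodFrame Fs) (c+1) x (Function.update ((z 0).val) 0 (w' 0)) :=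
          reachLe_snoc h1 hstep
        have hupd : Function.update (gmap Fs (u t) hT z) 0 (w' 0) = w' := by
          funext k
          by_cases hk : k = 0
          · subst hk; erw [Function.update_self]
          · erw [Function.update_of_ne hk]; exact hw.2 k hk
        have h2' : treachLe (prodFrame Fs) c (Function.update ((z 0).val) 0 (w' 0)) w' := by
          have := treach_update Fs c h2 (w' 0)
          rwa [hupd] at this
        have ha'T : Function.update ((z 0).val) 0 (w' 0) ∈ u t :=
          H2 _ (reachLe_le hcd h1') ⟨w', treachLe_le hcd0 h2', hw'T⟩
        have hz'0 : (Function.update z 0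
            (⟨Function.update ((z 0).val) 0 (w' 0), ha'T⟩ : (frameOne Fs (u t) hT).W)) 0
            = (⟨Function.update ((z 0).val) 0 (w' 0), ha'T⟩ : (frameOne Fs (u t) hT).W) :=
          Function.update_self _ _ _
        have hGR : (prodFrame (newFs Fs (u t) hT)).R 0 z
            (Function.update z 0
              (⟨Function.update ((z 0).val) 0 (w' 0), ha'T⟩ : (frameOne Fs (u t) hT).W)) := by
          refine ⟨?_, ?_⟩
          · show (frameOne Fs (u t) hT).R 0 (z 0) _
            rw [hz'0]
            refine ⟨?_, ?_⟩
            · show (Fs 0).R 0 ((z 0).val 0) (Function.update ((z 0).val) 0 (w' 0) 0)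
              erw [Function.update_self]; exact hw.1
            · intro k hk
              show (z 0).val k = Function.update ((z 0).val) 0 (w' 0) k
              erw [Function.update_of_ne hk]
          · intro k hk
            erw [Function.update_of_ne hk]
        have hgz' : gmap Fs (u t) hT (Function.update z 0
            (⟨Function.update ((z 0).val) 0 (w' 0), ha'T⟩ : (frameOne Fs (u t) hT).W)) = w' := by
          funext k
          rcases Fin.eq_zero_or_eq_succ k with rfl | ⟨l, rfl⟩
          · show ((Function.update z 0
                (⟨Function.update ((z 0).val) 0 (w' 0), ha'T⟩ : (frameOne Fs (u t) hT).W)) 0).val 0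
                = w' 0
            rw [hz'0]
            show Function.update ((z 0).val) 0 (w' 0) 0 = w' 0
            erw [Function.update_self]
          · show (Function.update z 0
                (⟨Function.update ((z 0).val) 0 (w' 0), ha'T⟩ : (frameOne Fs (u t) hT).W)) l.succ
                = w' l.succ
            erw [Function.update_of_ne (Fin.succ_ne_zero l)]
            exact hw.2 l.succ (Fin.succ_ne_zero l)
        have hsat := hAll _ hGR
        have hfin := (ih (c+1) _ hc' (by rw [hz'0]; exact h1')
          (by rw [hz'0, hgz']; exact treachLe_mono h2')).1 hsat
        rwa [hgz'] at hfin
      · intro hAll z' hz'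
        have hstep : (prodFrame Fs).R 0 ((z 0).val) ((z' 0).val) := ⟨hz'.1.1, hz'.1.2⟩
        have h1' : reachLe (prodFrame Fs) (c+1) x ((z' 0).val) := reachLe_snoc h1 hstep
        have hgz' : gmap Fs (u t) hT z' =
            Function.update (gmap Fs (u t) hT z) 0 ((z' 0).val 0) := by
          funext k
          rcases Fin.eq_zero_or_eq_succ k with rfl | ⟨l, rfl⟩
          · erw [Function.update_self]; rfl
          · erw [Function.update_of_ne (Fin.succ_ne_zero l)]
            show z' l.succ = z l.succ
            exact (hz'.2 l.succ (Fin.succ_ne_zero l)).symm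
        have hua : Function.update ((z 0).val) 0 ((z' 0).val 0) = (z' 0).val := by
          funext k
          by_cases hk : k = 0
          · subst hk; erw [Function.update_self]
          · erw [Function.update_of_ne hk]; exact hz'.1.2 k hk
        have h2' : treachLe (prodFrame Fs) c ((z' 0).val) (gmap Fs (u t) hT z') := by
          have := treach_update Fs c h2 ((z' 0).val 0)
          rw [hua] at this
          rwa [← hgz'] at this
        have hFR : (prodFrame Fs).R 0 (gmap Fs (u t) hT z) (gmap Fs (u t) hT z') := by
          refine ⟨hz'.1.1, ?_⟩
          intro k hk
          erw [hgz', Function.update_of_ne hk]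
        have hmem : gmap Fs (u t) hT z' ∈ u t :=
          H1 _ (reachLe_le hcd h1') (z' 0).property _ (treachLe_le hcd0 h2')
        exact (ih (c+1) z' hc' h1' (treachLe_mono h2')).2 (hAll _ hFR hmem)
    · -- a tail modality
      constructor
      · intro hAll w' hw _
        have h0ne : (0 : Fin (n+1)) ≠ j.succ := Ne.symm (Fin.succ_ne_zero j)
        have hGR : (prodFrame (newFs Fs (u t) hT)).R j.succ z
            (Function.update z j.succ (w' j.succ)) := by
          refine ⟨?_, ?_⟩
          · show (Fs j.succ).R 0 (z j.succ) (Function.update z j.succ (w' j.succ) j.succ)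
            erw [Function.update_self]
            exact hw.1
          · intro k hk; erw [Function.update_of_ne hk]
        have hz'0 : (Function.update z j.succ (w' j.succ)) 0 = z 0 :=
          Function.update_of_ne h0ne _ _
        have hgz' : gmap Fs (u t) hT (Function.update z j.succ (w' j.succ)) = w' := by
          funext k
          rcases Fin.eq_zero_or_eq_succ k with rfl | ⟨l, rfl⟩
          · show ((Function.update z j.succ (w' j.succ)) 0).val 0 = w' 0
            rw [hz'0]
            exact hw.2 0 h0ne
          · show (Function.update z j.succ (w' j.succ)) l.succ = w' l.succ
            by_cases hlj : l = j
            · subst hlj; erw [Function.update_self]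
            · have : l.succ ≠ j.succ := fun he => hlj (Fin.succ_inj.mp he)
              erw [Function.update_of_ne this]
              exact hw.2 l.succ this
        have h1' : reachLe (prodFrame Fs) (c+1) x
            (((Function.update z j.succ (w' j.succ)) 0).val) := by
          rw [hz'0]; exact reachLe_mono h1
        have h2' : treachLe (prodFrame Fs) (c+1)
            (((Function.update z j.succ (w' j.succ)) 0).val)
            (gmap Fs (u t) hT (Function.update z j.succ (w' j.succ))) := by
          rw [hz'0, hgz']
          exact treachLe_snoc h2 hw
        have hfin := (ih (c+1) _ hc' h1' h2').1 (hAll _ hGR)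
        rwa [hgz'] at hfin
      · intro hAll z' hz'
        have h0ne : (0 : Fin (n+1)) ≠ j.succ := Ne.symm (Fin.succ_ne_zero j)
        have hz'0 : z' 0 = z 0 := (hz'.2 0 h0ne).symm
        have hFR : (prodFrame Fs).R j.succ (gmap Fs (u t) hT z) (gmap Fs (u t) hT z') := by
          refine ⟨hz'.1, ?_⟩
          intro k hk
          rcases Fin.eq_zero_or_eq_succ k with rfl | ⟨l, rfl⟩
          · show (z 0).val 0 = (z' 0).val 0
            rw [hz'0]
          · show z l.succ = z' l.succ
            exact hz'.2 l.succ hk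
        have h1' : reachLe (prodFrame Fs) (c+1) x ((z' 0).val) := by
          rw [hz'0]; exact reachLe_mono h1
        have h2' : treachLe (prodFrame Fs) (c+1) ((z' 0).val) (gmap Fs (u t) hT z') := by
          rw [hz'0]; exact treachLe_snoc h2 hFR
        have hmem : gmap Fs (u t) hT z' ∈ u t := by
          refine H1 ((z 0).val) (reachLe_le hcd0 h1) (z 0).property _ ?_
          exact treachLe_le hcd (treachLe_snoc h2 hFR)
        exact (ih (c+1) z' hc' h1' h2').2 (hAll _ hFR hmem)

end Bisim
end ModalProducts

open ModalProducts

/-- **Lemma 3.1, direction (⇒), contrapositive.** Let `n ≥ 1`, let `L₂, …, Lₙ` be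
Kripke complete monomodal logics and `L = T × L₂ × … × Lₙ`.  For an `(n+1)`-modal
formula `φ` whose variables are among `p₁, …, p_m`, with `A` and `σ` defined from `φ`:
if `A → σ(φ) ∉ L` then `φ ∉ L`. -/
theorem products_with_T_lemma_3_1_right (n m : ℕ) (Ls : Fin n → Set (MF 1))
    (hLs : ∀ i, KripkeComplete (Ls i))
    (L : Set (MF (n+1)))
    (hL : L = productLogic (Fin.cases (motive := fun _ => Set (MF 1)) logicT Ls))
    (φ : MF (n+1)) (hvars : ∀ q ∈ φ.vars, 1 ≤ q ∧ q ≤ m)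
    (h : MF.imp (Af m φ) (sigmaT m φ) ∉ L) :
    φ ∉ L := by
  intro hφ
  apply h
  subst hL
  rintro F ⟨Fs, hFs, rfl⟩ v x0
  intro hA
  -- the valuation by the β-formulas
  set u : ℕ → Set (prodFrame Fs).W :=
    fun q => {y | Sat (prodFrame Fs) v y (betaF q)} with hu
  set t := m + 1 with ht
  set d := φ.md with hd
  rw [Af_eq] at hA
  have hA' : Sat (prodFrame Fs) u x0 (Aaux t d) := (sat_subst _ _ _ _ x0).1 hA
  have hx : x0 ∈ u t := hA'.1
  have hP1 := hA'.2.1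
  have hP2 := hA'.2.2
  have H1 : ∀ y, reachLe (prodFrame Fs) d x0 y → y ∈ u t →
      ∀ w, treachLe (prodFrame Fs) d y w → w ∈ u t := by
    intro y hy hyT w hw
    have := (sat_boxLe u d _ x0).1 hP1 y hy hyT
    exact (sat_boxLeTail u d _ y).1 this w hw
  have H2 : ∀ y, reachLe (prodFrame Fs) d x0 y →
      (∃ w, treachLe (prodFrame Fs) d y w ∧ w ∈ u t) → y ∈ u t := by
    rintro y hy ⟨w, hw, hwT⟩
    exact (sat_boxLe u d _ x0).1 hP2 y hy ((sat_diaLeTail u d _ y).2 ⟨w, hw, hwT⟩)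
  have hT : (u t).Nonempty := ⟨x0, hx⟩
  -- the new product frame
  have hG : ∀ i, ValidSet (newFs Fs (u t) hT i)
      (Fin.cases (motive := fun _ => Set (MF 1)) logicT Ls i) := by
    intro i
    rcases Fin.eq_zero_or_eq_succ i with rfl | ⟨j, rfl⟩
    · show ValidSet (frameOne Fs (u t) hT) logicT
      exact validSet_logicT_of_reflexive
        (frameOne_reflexive _ _ _ (reflexive_of_validSet_logicT (hFs 0)))
    · exact hFs j.succ
  have hGφ : Valid (prodFrame (newFs Fs (u t) hT)) φ :=
    hφ _ ⟨newFs Fs (u t) hT, hG, rfl⟩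
  -- the distinguished point of the new frame
  let xhat : (prodFrame (newFs Fs (u t) hT)).W :=
    Fin.cases (motive := fun i => (newFs Fs (u t) hT i).W)
      (⟨x0, hx⟩ : (frameOne Fs (u t) hT).W) (fun j => x0 j.succ)
  have hgx : gmap Fs (u t) hT xhat = x0 := by
    funext k
    rcases Fin.eq_zero_or_eq_succ k with rfl | ⟨l, rfl⟩
    · rfl
    · rfl
  have hiff := key_bisim Fs u t hT d x0 H1 H2 φ 0 xhat (by simp [hd]) rfl hgx.symm
  have hsatG : Sat (prodFrame (newFs Fs (u t) hT))
      (fun q => gmap Fs (u t) hT ⁻¹' u q) xhat φ := hGφ _ xhat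
  have hrel : Sat (prodFrame Fs) u x0 (relv t φ) := by
    have := hiff.1 hsatG
    rwa [hgx] at this
  show Sat (prodFrame Fs) v x0 (sigmaT m φ)
  rw [sigma_eq]
  exact (sat_subst _ _ _ _ x0).2 hrel
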